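/- Let K ⊆ ℝ^d contain all k-group sparse vectors in the unit ball (k ≤ d/4, d/k an integer). Then for every 0 < t ≤ 1, the t/10-packing number of K ∩ B₂^d(t) is at least exp(c·k·log(d/k)) for an absolute constant c > 0. -/

import Mathlib

/-- The index of the `r`-th entry of the `i`-th block, when `ℝ^(k q)` is divided
into `k` consecutive blocks of size `q`. -/
def blockIdx {k q : ℕ} (i : Fin k) (r : Fin q) : Fin (k * q) :=
  ⟨i * q + r, by
    have hi := i.2
    have hr := r.2
    calc (i : ℕ) * q + r < i * q + q := by omega
      _ = ((i : ℕ) + 1) * q := by ring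
      _ ≤ k * q := Nat.mul_le_mul_right q hi⟩

/-- `v ∈ ℝ^(k q)` is `k`-group sparse if each of the `k` consecutive blocks of
size `q` has exactly one nonzero entry. -/
def IsGroupSparse (k q : ℕ) (v : EuclideanSpace ℝ (Fin (k * q))) : Prop :=
  ∀ i : Fin k, ∃! r : Fin q, v (blockIdx i r) ≠ 0

open Finset

lemma ball_card_le {k q : ℕ} (hq : 0 < q) (r : ℕ) (p : Fin k → Fin q) :
    (Finset.univ.filter fun g : Fin k → Fin q => hammingDist g p ≤ r).card
      ≤ 2 ^ k * q ^ r := by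
  classical
  set Δ : (Fin k → Fin q) → Finset (Fin k) :=
    fun g => Finset.univ.filter (fun i => g i ≠ p i) with hΔdef
  have hham : ∀ g, hammingDist g p = (Δ g).card := fun g => rfl
  set enc : (Fin k → Fin q) → Finset (Fin k) × (Fin r → Fin q) := fun g =>
    (Δ g, fun j => if h : (j : ℕ) < ((Δ g).sort (· ≤ ·)).length
      then g (((Δ g).sort (· ≤ ·)).get ⟨j, h⟩) else ⟨0, hq⟩) with hencdef
  set dec : Finset (Fin k) × (Fin r → Fin q) → (Fin k → Fin q) := fun P i =>
    if i ∈ P.1 then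
      (if h : (P.1.sort (· ≤ ·)).idxOf i < r then P.2 ⟨_, h⟩ else ⟨0, hq⟩)
    else p i with hdecdef
  have hleft : ∀ g, hammingDist g p ≤ r → dec (enc g) = g := by
    intro g hg
    funext i
    by_cases hi : i ∈ Δ g
    · have hmem : i ∈ (Δ g).sort (· ≤ ·) := by
        rw [Finset.mem_sort]; exact hi
      have hidx : ((Δ g).sort (· ≤ ·)).idxOf i < ((Δ g).sort (· ≤ ·)).length :=
        List.idxOf_lt_length_iff.2 hmem
      have hlen : ((Δ g).sort (· ≤ ·)).length = (Δ g).card := Finset.length_sort _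
      have hidxr : ((Δ g).sort (· ≤ ·)).idxOf i < r := by
        rw [hham] at hg; omega
      simp only [hdecdef, hencdef, hi, if_pos, dif_pos hidxr, dif_pos hidx]
      congr 1
      exact List.idxOf_get hidx
    · have : g i = p i := by
        by_contra hne
        exact hi (by simp [hΔdef, hne])
      simp [hdecdef, hencdef, hi, this]
  have hinj : Set.InjOn enc
      ↑(Finset.univ.filter fun g : Fin k → Fin q => hammingDist g p ≤ r) := by
    intro g₁ h₁ g₂ h₂ he
    simp only [Finset.coe_filter, Set.mem_setOf_eq, Finset.mem_univ, true_and] at h₁ h₂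
    calc g₁ = dec (enc g₁) := (hleft g₁ h₁).symm
    _ = dec (enc g₂) := by rw [he]
    _ = g₂ := hleft g₂ h₂
  have hle := Finset.card_le_card_of_injOn enc
    (fun g _ => Finset.mem_univ (enc g)) hinj
  calc (Finset.univ.filter fun g : Fin k → Fin q => hammingDist g p ≤ r).card
      ≤ (Finset.univ : Finset (Finset (Fin k) × (Fin r → Fin q))).card := hle
    _ = 2 ^ k * q ^ r := by
        simp [Fintype.card_prod, Fintype.card_finset, Fintype.card_fun]

lemma exists_code (k q D : ℕ) (hq : 0 < q) (hD : 0 < D) :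
    ∃ P : Finset (Fin k → Fin q),
      (∀ f ∈ P, ∀ g ∈ P, f ≠ g → D ≤ hammingDist f g) ∧
      q ^ k ≤ P.card * (2 ^ k * q ^ (D - 1)) := by
  classical
  set Good : Finset (Fin k → Fin q) → Prop :=
    fun P => ∀ f ∈ P, ∀ g ∈ P, f ≠ g → D ≤ hammingDist f g with hGood
  set S := Finset.univ.powerset.filter Good with hS
  have hne : S.Nonempty := ⟨∅, by simp [hS, hGood]⟩
  obtain ⟨P, hPS, hmax⟩ := Finset.exists_max_image S Finset.card hne
  simp only [hS, Finset.mem_filter] at hPS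
  have hPGood : Good P := hPS.2
  refine ⟨P, hPGood, ?_⟩
  have hcov : ∀ g : Fin k → Fin q, ∃ p ∈ P, hammingDist g p ≤ D - 1 := by
    intro g
    by_contra hc
    push_neg at hc
    have hfar : ∀ p ∈ P, D ≤ hammingDist g p := by
      intro p hp
      have := hc p hp
      omega
    have hgP : g ∉ P := fun hg => by
      have := hfar g hg
      rw [hammingDist_self] at this
      omega
    have hins : insert g P ∈ S := by
      simp only [hS, Finset.mem_filter, Finset.mem_powerset]
      refine ⟨Finset.subset_univ _, ?_⟩
      intro f hf f' hf' hne'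
      rcases Finset.mem_insert.1 hf with hfg | hfP
      · rcases Finset.mem_insert.1 hf' with hf'g | hf'P
        · exact absurd (hfg.trans hf'g.symm) hne'
        · rw [hfg]; exact hfar f' hf'P
      · rcases Finset.mem_insert.1 hf' with hf'g | hf'P
        · rw [hf'g, hammingDist_comm]; exact hfar f hfP
        · exact hPGood f hfP f' hf'P hne'
    have := hmax _ hins
    rw [Finset.card_insert_of_notMem hgP] at this
    omega
  have hsub : (Finset.univ : Finset (Fin k → Fin q)) ⊆
      P.biUnion (fun p => Finset.univ.filter fun g => hammingDist g p ≤ D - 1) := by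
    intro g _
    obtain ⟨p, hp, hd⟩ := hcov g
    exact Finset.mem_biUnion.2 ⟨p, hp, by simp [hd]⟩
  calc q ^ k = (Finset.univ : Finset (Fin k → Fin q)).card := by
        simp [Finset.card_univ]
    _ ≤ (P.biUnion _).card := Finset.card_le_card hsub
    _ ≤ ∑ p ∈ P, (Finset.univ.filter fun g => hammingDist g p ≤ D - 1).card :=
        Finset.card_biUnion_le
    _ ≤ ∑ p ∈ P, 2 ^ k * q ^ (D - 1) :=
        Finset.sum_le_sum fun p _ => ball_card_le hq (D - 1) p
    _ = P.card * (2 ^ k * q ^ (D - 1)) := by simp [Finset.sum_const, mul_comm]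

def blockEquiv (k q : ℕ) (hq : 0 < q) : Fin k × Fin q ≃ Fin (k * q) where
  toFun p := blockIdx p.1 p.2
  invFun n := (⟨(n : ℕ) / q, Nat.div_lt_of_lt_mul (Nat.lt_of_lt_of_le n.2 (Nat.le_of_eq (Nat.mul_comm k q)))⟩,
    ⟨(n : ℕ) % q, Nat.mod_lt _ hq⟩)
  left_inv := by
    rintro ⟨i, r⟩
    have h1 : ((i : ℕ) * q + r) / q = i := by
      rw [mul_comm, Nat.mul_add_div hq, Nat.div_eq_of_lt r.2, add_zero]
    have h2 : ((i : ℕ) * q + r) % q = r := by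
      rw [mul_comm, Nat.mul_add_mod, Nat.mod_eq_of_lt r.2]
    simp only [blockIdx, Prod.mk.injEq]
    exact ⟨Fin.ext h1, Fin.ext h2⟩
  right_inv := by
    intro n
    apply Fin.ext
    simp only [blockIdx]
    rw [mul_comm]
    exact Nat.div_add_mod _ _


lemma sum_blocks {k q : ℕ} (hq : 0 < q) (F : Fin (k * q) → ℝ) :
    ∑ n, F n = ∑ i : Fin k, ∑ r : Fin q, F (blockIdx i r) := by
  rw [← Equiv.sum_comp (blockEquiv k q hq) F, Fintype.sum_prod_type]
  rfl

lemma code_card_lower (k q N : ℕ) (hk : 0 < k) (hq4 : 4 ≤ q)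
    (h : q ^ k ≤ N * (2 ^ k * q ^ (k / 200))) :
    Real.exp (1 / 4 * k * Real.log q) ≤ N := by
  have hqR : (4 : ℝ) ≤ q := by exact_mod_cast hq4
  have hq1 : (1 : ℝ) ≤ q := by linarith
  have hq0 : (0 : ℝ) < q := by linarith
  set X : ℝ := 2 ^ k * (q : ℝ) ^ (k / 200 : ℕ) with hX
  have hX0 : 0 < X := by positivity
  have hcast : (q : ℝ) ^ k ≤ N * X := by
    rw [hX]
    exact_mod_cast h
  have hexp : Real.exp (1 / 4 * k * Real.log q) = (q : ℝ) ^ ((k : ℝ) / 4) := by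
    rw [Real.rpow_def_of_pos hq0]
    ring_nf
  rw [hexp]
  have h2 : (2 : ℝ) ^ k ≤ (q : ℝ) ^ ((k : ℝ) / 2) := by
    have e : ((q : ℝ) ^ ((1 : ℝ) / 2)) ^ k = (q : ℝ) ^ ((k : ℝ) / 2) := by
      rw [← Real.rpow_natCast ((q : ℝ) ^ ((1 : ℝ) / 2)) k, ← Real.rpow_mul hq0.le]
      ring_nf
    rw [← e]
    apply pow_le_pow_left₀ (by norm_num)
    have h4 : (4 : ℝ) ^ ((1 : ℝ) / 2) = 2 := by
      rw [show (4 : ℝ) = 2 ^ (2 : ℕ) by norm_num, ← Real.rpow_natCast 2 2,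
        ← Real.rpow_mul (by norm_num)]
      norm_num
    calc (2 : ℝ) = 4 ^ ((1 : ℝ) / 2) := h4.symm
      _ ≤ q ^ ((1 : ℝ) / 2) := Real.rpow_le_rpow (by norm_num) hqR (by norm_num)
  have h3 : (q : ℝ) ^ (k / 200 : ℕ) ≤ (q : ℝ) ^ ((k : ℝ) / 4) := by
    rw [← Real.rpow_natCast (q : ℝ) (k / 200)]
    apply Real.rpow_le_rpow_of_exponent_le hq1
    have h1 : ((k / 200 : ℕ) : ℝ) ≤ (k : ℝ) / 200 := Nat.cast_div_le
    have h2 : (0 : ℝ) ≤ (k : ℝ) := Nat.cast_nonneg k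
    linarith
  have key : (q : ℝ) ^ ((k : ℝ) / 4) * X ≤ (q : ℝ) ^ k := by
    calc (q : ℝ) ^ ((k : ℝ) / 4) * X
        = (q : ℝ) ^ ((k : ℝ) / 4) * (2 : ℝ) ^ k * (q : ℝ) ^ (k / 200 : ℕ) := by
          rw [hX]; ring
      _ ≤ (q : ℝ) ^ ((k : ℝ) / 4) * (q : ℝ) ^ ((k : ℝ) / 2) * (q : ℝ) ^ ((k : ℝ) / 4) := by
          apply mul_le_mul _ h3 (by positivity) (by positivity)
          apply mul_le_mul le_rfl h2 (by positivity) (by positivity)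
      _ = (q : ℝ) ^ ((k : ℝ) / 4 + (k : ℝ) / 2 + (k : ℝ) / 4) := by
          rw [← Real.rpow_add hq0, ← Real.rpow_add hq0]
      _ = (q : ℝ) ^ k := by
          rw [show (k : ℝ) / 4 + (k : ℝ) / 2 + (k : ℝ) / 4 = (k : ℝ) by ring,
            Real.rpow_natCast]
  exact le_of_mul_le_mul_right (key.trans hcast) hX0

/-- there is an absolute constant `c > 0` such that if
`K ⊆ ℝ^d` (`d = k q`, `k ≤ d/4`) contains all `k`-group sparse vectors of the
unit ball, then for every `0 < t ≤ 1` the `t/10`-packing number of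
`K ∩ B₂^d(t)` is at least `exp(c k log(d/k))`. -/
theorem stmt_7 : ∃ c : ℝ, 0 < c ∧
    ∀ (k q : ℕ), 0 < k → 4 * k ≤ k * q →
    ∀ K : Set (EuclideanSpace ℝ (Fin (k * q))),
    (∀ v : EuclideanSpace ℝ (Fin (k * q)),
      IsGroupSparse k q v → ‖v‖ ≤ 1 → v ∈ K) →
    ∀ t : ℝ, 0 < t → t ≤ 1 →
    ∃ P : Finset (EuclideanSpace ℝ (Fin (k * q))),
      ↑P ⊆ K ∩ Metric.closedBall 0 t ∧
      (∀ x ∈ P, ∀ y ∈ P, x ≠ y → t / 10 < dist x y) ∧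
      Real.exp (c * k * Real.log ((k * q : ℝ) / k)) ≤ P.card := by
  refine ⟨1 / 4, by norm_num, ?_⟩
  intro k q hk hkq K hK t ht ht1
  classical
  have hq4 : 4 ≤ q := by
    rw [mul_comm k q] at hkq
    exact Nat.le_of_mul_le_mul_right hkq hk
  have hq : 0 < q := by omega
  have hkR : (0 : ℝ) < k := by exact_mod_cast hk
  have hsqrtk : (0 : ℝ) < Real.sqrt k := Real.sqrt_pos.2 hkR
  set c0 : ℝ := t / Real.sqrt k with hc0def
  have hc0 : 0 < c0 := div_pos ht hsqrtk
  have hc0sq : c0 ^ 2 = t ^ 2 / k := by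
    rw [hc0def, div_pow, Real.sq_sqrt hkR.le]
  set E := blockEquiv k q hq with hE
  set vec : (Fin k → Fin q) → EuclideanSpace ℝ (Fin (k * q)) := fun f => WithLp.toLp 2 (fun n =>
    if (E.symm n).2 = f (E.symm n).1 then c0 else 0) with hvecdef
  have hvec_apply : ∀ f (i : Fin k) (r : Fin q),
      vec f (blockIdx i r) = if r = f i then c0 else 0 := by
    intro f i r
    have h1 : blockIdx i r = E (i, r) := rfl
    rw [hvecdef]
    simp only [h1, Equiv.symm_apply_apply, PiLp.toLp_apply]
  have hnormsq : ∀ f, ∑ n, ‖vec f n‖ ^ 2 = t ^ 2 := by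
    intro f
    rw [sum_blocks hq]
    have hpt : ∀ (i : Fin k) (r : Fin q), ‖vec f (blockIdx i r)‖ ^ 2
        = if r = f i then c0 ^ 2 else 0 := by
      intro i r
      rw [hvec_apply]
      split_ifs <;> simp [Real.norm_eq_abs, sq_abs]
    calc ∑ i : Fin k, ∑ r : Fin q, ‖vec f (blockIdx i r)‖ ^ 2
        = ∑ i : Fin k, ∑ r : Fin q, (if r = f i then c0 ^ 2 else 0) :=
          Finset.sum_congr rfl fun i _ => Finset.sum_congr rfl fun r _ => hpt i r
      _ = ∑ _i : Fin k, c0 ^ 2 := by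
          refine Finset.sum_congr rfl fun i _ => ?_
          rw [Finset.sum_ite_eq' Finset.univ (f i) fun _ => c0 ^ 2]
          simp
      _ = t ^ 2 := by
          rw [Finset.sum_const, Finset.card_univ, Fintype.card_fin, nsmul_eq_mul, hc0sq]
          field_simp
  have hnorm : ∀ f, ‖vec f‖ = t := by
    intro f
    rw [EuclideanSpace.norm_eq, hnormsq f]
    exact Real.sqrt_sq ht.le
  have hdistsum : ∀ f g : Fin k → Fin q,
      ∑ n, (vec f n - vec g n) ^ 2 = hammingDist f g * (2 * (t ^ 2 / k)) := by
    intro f g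
    rw [sum_blocks hq]
    have hblock : ∀ i : Fin k, ∑ r : Fin q,
        (vec f (blockIdx i r) - vec g (blockIdx i r)) ^ 2
        = if f i = g i then 0 else 2 * (t ^ 2 / k) := by
      intro i
      by_cases hfg : f i = g i
      · rw [if_pos hfg]
        refine Finset.sum_eq_zero fun r _ => ?_
        rw [hvec_apply, hvec_apply, hfg, sub_self]
        ring
      · rw [if_neg hfg]
        have hpt : ∀ r : Fin q, (vec f (blockIdx i r) - vec g (blockIdx i r)) ^ 2
            = (if r = f i then c0 ^ 2 else 0) + (if r = g i then c0 ^ 2 else 0) := by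
          intro r
          rw [hvec_apply, hvec_apply]
          split_ifs with h1 h2
          · exact absurd (h1.symm.trans h2) hfg
          all_goals ring
        rw [Finset.sum_congr rfl fun r _ => hpt r, Finset.sum_add_distrib,
          Finset.sum_ite_eq' Finset.univ (f i) fun _ => c0 ^ 2,
          Finset.sum_ite_eq' Finset.univ (g i) fun _ => c0 ^ 2]
        simp only [Finset.mem_univ, if_pos]
        rw [hc0sq]; ring
    rw [Finset.sum_congr rfl fun i _ => hblock i, Finset.sum_ite,
      Finset.sum_const_zero, Finset.sum_const, zero_add, nsmul_eq_mul]
    congr 2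
  have hdist : ∀ f g : Fin k → Fin q, k < 200 * hammingDist f g →
      t / 10 < dist (vec f) (vec g) := by
    intro f g hfg
    rw [EuclideanSpace.dist_eq]
    have e1 : ∀ n, dist (vec f n) (vec g n) ^ 2 = (vec f n - vec g n) ^ 2 := fun n => by
      rw [Real.dist_eq, sq_abs]
    rw [Finset.sum_congr rfl fun n _ => e1 n, hdistsum f g,
      Real.lt_sqrt (by positivity)]
    have hh : (k : ℝ) < 200 * hammingDist f g := by exact_mod_cast hfg
    have ht2 : (0 : ℝ) < t ^ 2 := pow_pos ht 2
    rw [div_pow, div_lt_iff₀ (by norm_num : (0 : ℝ) < 10 ^ 2),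
      show (hammingDist f g : ℝ) * (2 * (t ^ 2 / k)) * 10 ^ 2
        = 200 * (hammingDist f g : ℝ) * t ^ 2 / k by ring,
      lt_div_iff₀ hkR]
    nlinarith [mul_pos (sub_pos.2 hh) ht2]
  have hmem : ∀ f, vec f ∈ K ∩ Metric.closedBall 0 t := by
    intro f
    constructor
    · apply hK
      · intro i
        refine ⟨f i, ?_, ?_⟩
        · show vec f (blockIdx i (f i)) ≠ 0
          rw [hvec_apply]
          simp [hc0.ne']
        · intro r hr
          have hr' : vec f (blockIdx i r) ≠ 0 := hr
          rw [hvec_apply] at hr'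
          by_contra hne
          rw [if_neg hne] at hr'
          exact hr' rfl
      · rw [hnorm]
        exact ht1
    · rw [Metric.mem_closedBall, dist_zero_right, hnorm]
  have hinj : Function.Injective vec := by
    intro f g hfgv
    funext i
    have h := congrArg (fun v => v (blockIdx i (f i))) hfgv
    rw [hvec_apply, hvec_apply, if_pos rfl] at h
    by_contra hne
    rw [if_neg hne] at h
    exact hc0.ne' h
  obtain ⟨C, hCd, hCcard⟩ := exists_code k q (k / 200 + 1) hq (Nat.succ_pos _)
  refine ⟨C.image vec, ?_, ?_, ?_⟩
  · intro x hx
    rw [Finset.coe_image] at hx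
    obtain ⟨f, _, rfl⟩ := hx
    exact hmem f
  · intro x hx y hy hxy
    obtain ⟨f, hf, rfl⟩ := Finset.mem_image.1 hx
    obtain ⟨g, hg, rfl⟩ := Finset.mem_image.1 hy
    have hfg : f ≠ g := fun h => hxy (by rw [h])
    have hD := hCd f hf g hg hfg
    exact hdist f g (by omega)
  · rw [Finset.card_image_of_injective C hinj]
    have hlog : Real.log ((k * q : ℝ) / k) = Real.log q := by
      congr 1
      rw [mul_comm, mul_div_assoc, div_self hkR.ne', mul_one]
    rw [hlog]
    exact code_card_lower k q C.card hk hq4 (by simpa using hCcard)
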